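/- arXiv:1212.5523 — 2 statements merged into one kernel-verified Lean document; each statement's English description precedes it below -/
import Mathlib

section
/- Let μ > 0, η̃ > 0, and let G : ℝᵐ → ℝ be continuous with |G(y)| ≤ μη̃ for all y. If y : [t⁰,∞) → ℝᵐ is continuous and η : [t⁰,∞) → ℝ is differentiable with η'(t) = -μ(η(t) - η̃) + G(y(t)) for all t > t⁰, and η(t⁰) ∈ [0, 2η̃], then η(t) ∈ [0, 2η̃] for all t ≥ t⁰. -/
/-- Invariance of the interval [0, 2η̃] for the delay ODE
    η'(t) = -μ(η(t) - η̃) + G(y(t)) under the bound |G| ≤ μη̃. -/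
theorem delay_interval_invariance {m : ℕ} (μ ηt t0 : ℝ) (hμ : 0 < μ) (hηt : 0 < ηt)
    (G : (Fin m → ℝ) → ℝ) (hGcont : Continuous G) (hGb : ∀ y, |G y| ≤ μ * ηt)
    (y : ℝ → (Fin m → ℝ)) (hy : ContinuousOn y (Set.Ici t0))
    (η : ℝ → ℝ) (η' : ℝ → ℝ)
    (hηdiff : ∀ t ∈ Set.Ici t0, HasDerivAt η (η' t) t)
    (hode : ∀ t > t0, η' t = -μ * (η t - ηt) + G (y t))
    (h0 : η t0 ∈ Set.Icc 0 (2 * ηt)) :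
    ∀ t ≥ t0, η t ∈ Set.Icc 0 (2 * ηt) := by
  intro t ht
  have hcontη : ContinuousOn η (Set.Ici t0) := fun s hs =>
    ((hηdiff s hs).continuousAt).continuousWithinAt
  -- derivative of the exponential factor
  have hexp : ∀ s : ℝ, HasDerivAt (fun u : ℝ => Real.exp (μ * u)) (μ * Real.exp (μ * s)) s := by
    intro s
    have h1 : HasDerivAt (fun u : ℝ => μ * u) μ s := by
      simpa using (hasDerivAt_id s).const_mul μ
    exact ((Real.hasDerivAt_exp (μ * s)).comp s h1).congr_deriv (mul_comm _ _)
  -- derivative of g s = exp(μ s) * (η s - ηt)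
  have hg : ∀ s ∈ Set.Ioi t0,
      HasDerivAt (fun u => Real.exp (μ * u) * (η u - ηt)) (Real.exp (μ * s) * G (y s)) s := by
    intro s hs
    have h2 : HasDerivAt (fun u => η u - ηt) (η' s) s :=
      (hηdiff s (Set.mem_Ici.mpr (le_of_lt (Set.mem_Ioi.mp hs)))).sub_const ηt
    have h3 := (hexp s).mul h2
    refine h3.congr_deriv ?_
    rw [hode s hs]; ring
  have hepos : ∀ s : ℝ, 0 < Real.exp (μ * s) := fun s => Real.exp_pos _
  -- generic monotonicity: for σ = ±1, s ↦ ηt*exp(μ s) + σ * exp(μ s)*(η s - ηt) is monotone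
  have key : ∀ σ : ℝ, σ = 1 ∨ σ = -1 →
      MonotoneOn (fun u => ηt * Real.exp (μ * u) + σ * (Real.exp (μ * u) * (η u - ηt)))
        (Set.Ici t0) := by
    intro σ hσ
    have hF : ∀ s ∈ Set.Ioi t0,
        HasDerivAt (fun u => ηt * Real.exp (μ * u) + σ * (Real.exp (μ * u) * (η u - ηt)))
          (ηt * (μ * Real.exp (μ * s)) + σ * (Real.exp (μ * s) * G (y s))) s := by
      intro s hs
      exact ((hexp s).const_mul ηt).add ((hg s hs).const_mul σ)
    apply monotoneOn_of_deriv_nonneg (convex_Ici t0)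
    · apply ContinuousOn.add
      · exact (Real.continuous_exp.comp (continuous_const.mul continuous_id)).continuousOn.const_smul ηt |>.congr (fun x _ => rfl)
      · exact ContinuousOn.const_smul
          (((Real.continuous_exp.comp (continuous_const.mul continuous_id)).continuousOn).mul
            (hcontη.sub continuousOn_const)) σ |>.congr (fun x _ => rfl)
    · intro s hs
      rw [interior_Ici] at hs
      exact (hF s hs).differentiableAt.differentiableWithinAt
    · intro s hs
      rw [interior_Ici] at hs
      rw [(hF s hs).deriv]
      have hb := hGb (y s)
      have h1 : -(μ * ηt) ≤ G (y s) := neg_le_of_abs_le hb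
      have h2 : G (y s) ≤ μ * ηt := le_of_abs_le hb
      have he := (hepos s).le
      rcases hσ with h | h <;> subst h <;> nlinarith [hepos s]
  -- upper bound: η t ≤ 2 ηt
  have hup : η t ≤ 2 * ηt := by
    have := key (-1) (Or.inr rfl) (Set.self_mem_Ici) (ht : t ∈ Set.Ici t0) ht
    simp only [neg_one_mul, neg_mul] at this
    have h1 : Real.exp (μ * t0) * (η t0 - ηt) ≤ Real.exp (μ * t0) * ηt := by
      have := h0.2
      nlinarith [hepos t0]
    nlinarith [hepos t]
  -- lower bound: 0 ≤ η t
  have hlo : 0 ≤ η t := by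
    have := key 1 (Or.inl rfl) (Set.self_mem_Ici) (ht : t ∈ Set.Ici t0) ht
    simp only [one_mul] at this
    have h1 : -(Real.exp (μ * t0) * ηt) ≤ Real.exp (μ * t0) * (η t0 - ηt) := by
      have := h0.1
      nlinarith [hepos t0]
    nlinarith [hepos t]
  exact ⟨hlo, hup⟩
end

section
/- Let μ > 0, η̃ > 0, h₁ ∈ (0, η̃], and let G : ℝᵐ → ℝ satisfy |G(y)| ≤ μ(η̃ - h₁) for all y. If η : [t⁰,∞) → ℝ is differentiable with η'(t) = -μ(η(t) - η̃) + G(y(t)) for t > t⁰ and η(t⁰) ≥ h₁, then η(t) ≥ h₁ for all t ≥ t⁰. -/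
/-- If |G(y)| ≤ μ(η̃ - h₁) and η(t⁰) ≥ h₁ with h₁ ∈ (0, η̃], then the
    state-dependent delay η stays bounded below by h₁. -/
theorem delay_lower_bound_invariance {m : ℕ} (μ ηt h1 t0 : ℝ) (hμ : 0 < μ)
    (hηt : 0 < ηt) (hh1 : h1 ∈ Set.Ioc 0 ηt)
    (G : (Fin m → ℝ) → ℝ) (hGb : ∀ y, |G y| ≤ μ * (ηt - h1))
    (y : ℝ → (Fin m → ℝ)) (hy : ContinuousOn y (Set.Ici t0))
    (η : ℝ → ℝ) (η' : ℝ → ℝ)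
    (hηdiff : ∀ t ∈ Set.Ici t0, HasDerivAt η (η' t) t)
    (hode : ∀ t > t0, η' t = -μ * (η t - ηt) + G (y t))
    (h0 : h1 ≤ η t0) :
    ∀ t ≥ t0, h1 ≤ η t := by
  set f : ℝ → ℝ := fun t => Real.exp (μ * t) * (η t - h1) with hf_def
  have hf : ∀ t ∈ Set.Ici t0,
      HasDerivAt f (Real.exp (μ * t) * (μ * (η t - h1) + η' t)) t := by
    intro t ht
    have hexp : HasDerivAt (fun t => Real.exp (μ * t)) (Real.exp (μ * t) * μ) t := by
      have := (Real.hasDerivAt_exp (μ * t)).comp t ((hasDerivAt_id t).const_mul μ)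
      simpa [Function.comp_def] using this
    have := hexp.mul ((hηdiff t ht).sub_const h1)
    exact this.congr_deriv (by ring)
  have hmono : MonotoneOn f (Set.Ici t0) := by
    apply monotoneOn_of_deriv_nonneg (convex_Ici t0)
    · exact fun t ht => (hf t ht).continuousAt.continuousWithinAt
    · intro t ht
      rw [interior_Ici] at ht
      exact (hf t (Set.mem_Ici.mpr (le_of_lt ht))).differentiableAt.differentiableWithinAt
    · intro t ht
      rw [interior_Ici] at ht
      rw [(hf t (Set.mem_Ici.mpr (le_of_lt ht))).deriv, hode t ht]
      have hG := hGb (y t)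
      have hGlow : -(μ * (ηt - h1)) ≤ G (y t) := neg_le_of_abs_le hG
      have hpos : (0:ℝ) < Real.exp (μ * t) := Real.exp_pos _
      nlinarith [hpos]
  intro t ht
  have := hmono (Set.self_mem_Ici) (show t ∈ Set.Ici t0 from ht) ht
  simp only [hf_def] at this
  have h1' : (0:ℝ) ≤ Real.exp (μ * t0) * (η t0 - h1) := by
    have := Real.exp_pos (μ * t0)
    nlinarith
  have hpos : (0:ℝ) < Real.exp (μ * t) := Real.exp_pos _
  nlinarith
end
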